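/- arXiv:1210.1273 — 4 statements merged into one kernel-verified Lean document; each statement's English description precedes it below -/
import Mathlib

section
/- Let G be a Kuramoto graph on vertex set V with frequencies ω and mean ω̄, and suppose ν₁ ∈ V is a cut-vertex: V ∖ {ν₁} is the disjoint union of two nonempty sets S and S′ with no edge of G joining a vertex of S to a vertex of S′. Let G₁ be the induced subgraph of G on S ∪ {ν₁}, with the same frequencies on S but with the frequency of ν₁ replaced by ω_x = ω̄ − Σ_{i∈S} (ω_i − ω̄); let G₂ be the induced subgraph of G on S′ ∪ {ν₁}, with the same frequencies on S′ but with the frequency of ν₁ replaced by ω_y = ω̄ − Σ_{i∈S′} (ω_i − ω̄). (Both G₁ and G₂ then have mean frequency ω̄.) Then for every k ∈ ℝ, G has a frequency fixed point at coupling k if and only if both G₁ and G₂ have frequency fixed points at coupling k. -/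
open scoped Classical

/-- The mean frequency ω̄ of a Kuramoto graph. -/
noncomputable def kuramotoMean {V : Type*} [Fintype V] (ω : V → ℝ) : ℝ :=
  (∑ i, ω i) / (Fintype.card V : ℝ)

/-- `φ` is a frequency fixed point for the Kuramoto graph `(G, ω)` at coupling `k`:
for every vertex `i`, `ω i - ω̄ + k * ∑_{j ~ i} sin (φ j - φ i) = 0`. -/
def IsFreqFixedPoint {V : Type*} [Fintype V] (G : SimpleGraph V)
    (ω : V → ℝ) (k : ℝ) (φ : V → ℝ) : Prop :=
  ∀ i, ω i - kuramotoMean ω +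
    k * ∑ j ∈ Finset.univ.filter (fun j => G.Adj i j), Real.sin (φ j - φ i) = 0

section Aux
set_option linter.unusedSectionVars false
variable {V : Type*} [Fintype V] [DecidableEq V]

lemma ffp_shift (G : SimpleGraph V) (ω : V → ℝ) (k : ℝ) (φ : V → ℝ) (c : ℝ)
    (h : IsFreqFixedPoint G ω k φ) : IsFreqFixedPoint G ω k (fun i => φ i + c) := by
  intro i
  simpa using h i

lemma sin_double_sum_zero (G : SimpleGraph V) (Φ : V → ℝ) (s : Finset V) :
    ∑ i ∈ s, ∑ j ∈ s, (if G.Adj i j then Real.sin (Φ j - Φ i) else 0) = 0 := by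
  set T := ∑ i ∈ s, ∑ j ∈ s, (if G.Adj i j then Real.sin (Φ j - Φ i) else 0) with hT
  have h1 : T = ∑ j ∈ s, ∑ i ∈ s, (if G.Adj i j then Real.sin (Φ j - Φ i) else 0) :=
    Finset.sum_comm
  have h2 : T = -T := by
    nth_rewrite 1 [h1]
    rw [hT, ← Finset.sum_neg_distrib]
    refine Finset.sum_congr rfl fun i _ => ?_
    rw [← Finset.sum_neg_distrib]
    refine Finset.sum_congr rfl fun j _ => ?_
    by_cases h : G.Adj i j
    · have h' : G.Adj j i := G.adj_symm h
      simp [h, h', ← Real.sin_neg, neg_sub]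
    · have h' : ¬ G.Adj j i := fun hh => h (G.adj_symm hh)
      simp [h, h']
  linarith

lemma sum_induce_eq (G : SimpleGraph V) (s : Finset V) (Φ : V → ℝ) (a : V)
    (ha : a ∈ (↑s : Set V)) :
    ∑ j ∈ Finset.univ.filter (fun j : ↥(↑s : Set V) =>
        (G.induce (↑s : Set V)).Adj ⟨a, ha⟩ j), Real.sin (Φ ↑j - Φ a)
      = ∑ j ∈ s.filter (fun j => G.Adj a j), Real.sin (Φ j - Φ a) := by
  rw [Finset.sum_filter, Finset.sum_filter]
  exact (Finset.sum_subtype (p := fun x => x ∈ (↑s : Set V)) s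
    (fun x => Finset.mem_coe.symm)
    (fun j => if G.Adj a j then Real.sin (Φ j - Φ a) else 0)).symm

lemma mean_insert (ω : V → ℝ) (s : Finset V) (ν₁ : V) (h : ν₁ ∉ s) :
    kuramotoMean (fun i : ↥(↑(insert ν₁ s) : Set V) =>
      if (i : V) = ν₁ then kuramotoMean ω - ∑ j ∈ s, (ω j - kuramotoMean ω) else ω i)
      = kuramotoMean ω := by
  set m := kuramotoMean ω with hm
  rw [kuramotoMean]
  have hcard : (Fintype.card ↥(↑(insert ν₁ s) : Set V) : ℝ) = (s.card : ℝ) + 1 := by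
    simp [Finset.card_insert_of_notMem h]
  have hsum : ∑ i : ↥(↑(insert ν₁ s) : Set V),
      (if (i : V) = ν₁ then m - ∑ j ∈ s, (ω j - m) else ω ↑i)
      = ((s.card : ℝ) + 1) * m := by
    rw [← Finset.sum_subtype (p := fun x => x ∈ ((insert ν₁ s : Finset V) : Set V))
      (insert ν₁ s) (fun x => Finset.mem_coe.symm)
      (fun i => if i = ν₁ then m - ∑ j ∈ s, (ω j - m) else ω i)]
    rw [Finset.sum_insert h, if_pos rfl]
    rw [Finset.sum_congr rfl (fun i hi => if_neg (by rintro rfl; exact h hi))]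
    rw [Finset.sum_sub_distrib, Finset.sum_const, nsmul_eq_mul]
    ring
  rw [hsum, hcard]
  have : ((s.card : ℝ) + 1) ≠ 0 := by positivity
  field_simp

lemma sum_S_eq (G : SimpleGraph V) (ω : V → ℝ) (k : ℝ) (Φ : V → ℝ) (ν₁ : V) (S : Finset V)
    (hν : ν₁ ∉ S)
    (hclosed : ∀ i ∈ S, ∀ j, G.Adj i j → j ∈ insert ν₁ S)
    (heq : ∀ i ∈ S, ω i - kuramotoMean ω +
      k * ∑ j ∈ Finset.univ.filter (fun j => G.Adj i j), Real.sin (Φ j - Φ i) = 0) :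
    k * ∑ j ∈ S.filter (fun j => G.Adj ν₁ j), Real.sin (Φ j - Φ ν₁)
      = ∑ i ∈ S, (ω i - kuramotoMean ω) := by
  have hfilter : ∀ i ∈ S, Finset.univ.filter (fun j => G.Adj i j)
      = (insert ν₁ S).filter (fun j => G.Adj i j) := by
    intro i hi
    ext j
    simp only [Finset.mem_filter, Finset.mem_univ, true_and]
    exact ⟨fun hadj => ⟨hclosed i hi j hadj, hadj⟩, fun h => h.2⟩
  have H : ∑ i ∈ S, (ω i - kuramotoMean ω)
      + k * ∑ i ∈ S, ∑ j ∈ Finset.univ.filter (fun j => G.Adj i j), Real.sin (Φ j - Φ i)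
      = 0 := by
    rw [Finset.mul_sum, ← Finset.sum_add_distrib]
    exact Finset.sum_eq_zero heq
  have H2 : ∑ i ∈ S, ∑ j ∈ Finset.univ.filter (fun j => G.Adj i j), Real.sin (Φ j - Φ i)
      = - ∑ j ∈ S.filter (fun j => G.Adj ν₁ j), Real.sin (Φ j - Φ ν₁) := by
    have hstep : ∀ i ∈ S, ∑ j ∈ Finset.univ.filter (fun j => G.Adj i j), Real.sin (Φ j - Φ i)
        = (if G.Adj i ν₁ then Real.sin (Φ ν₁ - Φ i) else 0)
          + ∑ j ∈ S, (if G.Adj i j then Real.sin (Φ j - Φ i) else 0) := by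
      intro i hi
      rw [hfilter i hi, Finset.sum_filter, Finset.sum_insert hν]
    rw [Finset.sum_congr rfl hstep, Finset.sum_add_distrib, sin_double_sum_zero, add_zero]
    rw [Finset.sum_filter, ← Finset.sum_neg_distrib]
    refine Finset.sum_congr rfl fun j hj => ?_
    by_cases h : G.Adj ν₁ j
    · have h' : G.Adj j ν₁ := G.adj_symm h
      simp [h, h', ← Real.sin_neg, neg_sub]
    · have h' : ¬ G.Adj j ν₁ := fun hh => h (G.adj_symm hh)
      simp [h, h']
  rw [H2] at H
  linarith

lemma side_iff (G : SimpleGraph V) (ω : V → ℝ) (k : ℝ) (ν₁ : V) (S : Finset V)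
    (hν : ν₁ ∉ S) (hclosed : ∀ i ∈ S, ∀ j, G.Adj i j → j ∈ insert ν₁ S)
    (Φ : V → ℝ) :
    IsFreqFixedPoint (G.induce (↑(insert ν₁ S) : Set V))
      (fun i => if (i : V) = ν₁ then
          kuramotoMean ω - ∑ j ∈ S, (ω j - kuramotoMean ω) else ω i)
      k (fun x => Φ ↑x)
    ↔ ((∀ i ∈ S, ω i - kuramotoMean ω +
          k * ∑ j ∈ Finset.univ.filter (fun j => G.Adj i j), Real.sin (Φ j - Φ i) = 0)
       ∧ k * ∑ j ∈ S.filter (fun j => G.Adj ν₁ j), Real.sin (Φ j - Φ ν₁)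
           = ∑ i ∈ S, (ω i - kuramotoMean ω)) := by
  have hmean := mean_insert ω S ν₁ hν
  have hstep : IsFreqFixedPoint (G.induce (↑(insert ν₁ S) : Set V))
      (fun i => if (i : V) = ν₁ then
          kuramotoMean ω - ∑ j ∈ S, (ω j - kuramotoMean ω) else ω i)
      k (fun x => Φ ↑x)
      ↔ ∀ i ∈ insert ν₁ S,
        ((if i = ν₁ then kuramotoMean ω - ∑ j ∈ S, (ω j - kuramotoMean ω) else ω i)
          - kuramotoMean ω
          + k * ∑ j ∈ (insert ν₁ S).filter (fun j => G.Adj i j), Real.sin (Φ j - Φ i)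
          = 0) := by
    unfold IsFreqFixedPoint
    rw [hmean]
    constructor
    · intro h i hi
      have hx := h ⟨i, Finset.mem_coe.mpr hi⟩
      dsimp only at hx
      rw [← sum_induce_eq G (insert ν₁ S) Φ i (Finset.mem_coe.mpr hi)]
      convert hx
    · intro h x
      obtain ⟨i, hi⟩ := x
      have := h i (Finset.mem_coe.mp hi)
      rw [← sum_induce_eq G (insert ν₁ S) Φ i hi] at this
      exact this
  rw [hstep, Finset.forall_mem_insert]
  have h1 : ((if ν₁ = ν₁ then kuramotoMean ω - ∑ j ∈ S, (ω j - kuramotoMean ω) else ω ν₁)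
        - kuramotoMean ω
        + k * ∑ j ∈ (insert ν₁ S).filter (fun j => G.Adj ν₁ j), Real.sin (Φ j - Φ ν₁) = 0)
      ↔ (k * ∑ j ∈ S.filter (fun j => G.Adj ν₁ j), Real.sin (Φ j - Φ ν₁)
          = ∑ i ∈ S, (ω i - kuramotoMean ω)) := by
    rw [if_pos rfl, Finset.filter_insert, if_neg (G.irrefl)]
    constructor <;> intro h <;> linarith
  have h2 : ∀ i ∈ S,
      (((if i = ν₁ then kuramotoMean ω - ∑ j ∈ S, (ω j - kuramotoMean ω) else ω i)
        - kuramotoMean ω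
        + k * ∑ j ∈ (insert ν₁ S).filter (fun j => G.Adj i j), Real.sin (Φ j - Φ i) = 0)
      ↔ (ω i - kuramotoMean ω
        + k * ∑ j ∈ Finset.univ.filter (fun j => G.Adj i j), Real.sin (Φ j - Φ i) = 0)) := by
    intro i hi
    have hf : (insert ν₁ S).filter (fun j => G.Adj i j)
        = Finset.univ.filter (fun j => G.Adj i j) := by
      ext j
      simp only [Finset.mem_filter, Finset.mem_univ, true_and]
      exact ⟨fun h => h.2, fun h => ⟨hclosed i hi j h, h⟩⟩
    rw [if_neg (ne_of_mem_of_not_mem hi hν), hf]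
  constructor
  · rintro ⟨ha, hb⟩
    exact ⟨fun i hi => (h2 i hi).mp (hb i hi), h1.mp ha⟩
  · rintro ⟨ha, hb⟩
    exact ⟨h1.mpr hb, fun i hi => (h2 i hi).mpr (ha i hi)⟩

end Aux

/-- Cut-vertex lemma: if `ν₁` is a cut-vertex separating `S` from `S'`, then `G` has a
frequency fixed point at coupling `k` iff both induced Kuramoto graphs `G₁` (on `S ∪ {ν₁}`,
with the frequency of `ν₁` replaced by `ω_x = ω̄ - ∑_{i ∈ S} (ω i - ω̄)`) and `G₂`
(on `S' ∪ {ν₁}`, with the frequency of `ν₁` replaced by `ω_y = ω̄ - ∑_{i ∈ S'} (ω i - ω̄)`)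
have frequency fixed points at coupling `k`. -/


theorem cut_vertex_fixed_point {V : Type*} [Fintype V] [DecidableEq V]
    (G : SimpleGraph V) (ω : V → ℝ) (ν₁ : V) (S S' : Finset V)
    (hdisj : Disjoint S S') (hSne : S.Nonempty) (hS'ne : S'.Nonempty)
    (hν₁S : ν₁ ∉ S) (hν₁S' : ν₁ ∉ S')
    (hpart : ∀ i, i ≠ ν₁ → (i ∈ S ∨ i ∈ S'))
    (hcut : ∀ i ∈ S, ∀ j ∈ S', ¬ G.Adj i j)
    (k : ℝ) :
    (∃ φ, IsFreqFixedPoint G ω k φ) ↔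
      ((∃ φ₁, IsFreqFixedPoint (G.induce (↑(insert ν₁ S) : Set V))
          (fun i => if (i : V) = ν₁ then
              kuramotoMean ω - ∑ j ∈ S, (ω j - kuramotoMean ω)
            else ω i) k φ₁) ∧
       (∃ φ₂, IsFreqFixedPoint (G.induce (↑(insert ν₁ S') : Set V))
          (fun i => if (i : V) = ν₁ then
              kuramotoMean ω - ∑ j ∈ S', (ω j - kuramotoMean ω)
            else ω i) k φ₂)) := by
  have hclosedS : ∀ i ∈ S, ∀ j, G.Adj i j → j ∈ insert ν₁ S := by
    intro i hi j hadj
    by_cases hj : j = ν₁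
    · simp [hj]
    · rcases hpart j hj with h | h
      · exact Finset.mem_insert_of_mem h
      · exact absurd hadj (hcut i hi j h)
  have hclosedS' : ∀ i ∈ S', ∀ j, G.Adj i j → j ∈ insert ν₁ S' := by
    intro i hi j hadj
    by_cases hj : j = ν₁
    · simp [hj]
    · rcases hpart j hj with h | h
      · exact absurd (G.adj_symm hadj) (hcut j h i hi)
      · exact Finset.mem_insert_of_mem h
  constructor
  · rintro ⟨Φ, hΦ⟩
    exact ⟨⟨fun x => Φ ↑x, (side_iff G ω k ν₁ S hν₁S hclosedS Φ).mpr
        ⟨fun i _ => hΦ i, sum_S_eq G ω k Φ ν₁ S hν₁S hclosedS (fun i _ => hΦ i)⟩⟩,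
      ⟨fun x => Φ ↑x, (side_iff G ω k ν₁ S' hν₁S' hclosedS' Φ).mpr
        ⟨fun i _ => hΦ i, sum_S_eq G ω k Φ ν₁ S' hν₁S' hclosedS' (fun i _ => hΦ i)⟩⟩⟩
  · rintro ⟨⟨φ₁, h₁⟩, ⟨φ₂, h₂⟩⟩
    have hm₁ : ν₁ ∈ (↑(insert ν₁ S) : Set V) :=
      Finset.mem_coe.mpr (Finset.mem_insert_self _ _)
    have hm₂ : ν₁ ∈ (↑(insert ν₁ S') : Set V) :=
      Finset.mem_coe.mpr (Finset.mem_insert_self _ _)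
    set c : ℝ := φ₁ ⟨ν₁, hm₁⟩ - φ₂ ⟨ν₁, hm₂⟩ with hc
    set φ₂' : ↥(↑(insert ν₁ S') : Set V) → ℝ := fun x => φ₂ x + c with hφ₂'
    have h₂' : IsFreqFixedPoint (G.induce (↑(insert ν₁ S') : Set V))
        (fun i => if (i : V) = ν₁ then
            kuramotoMean ω - ∑ j ∈ S', (ω j - kuramotoMean ω) else ω i) k φ₂' :=
      ffp_shift _ _ _ _ c h₂
    set Φ : V → ℝ := fun i =>
      if h : i ∈ (insert ν₁ S : Finset V) then φ₁ ⟨i, Finset.mem_coe.mpr h⟩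
      else φ₂' ⟨i, Finset.mem_coe.mpr (Finset.mem_insert_of_mem
        ((hpart i (fun e => h (e ▸ Finset.mem_insert_self ν₁ S))).resolve_left
          (fun hS => h (Finset.mem_insert_of_mem hS))))⟩ with hΦdef
    have hΦ₁ : (fun x : ↥(↑(insert ν₁ S) : Set V) => Φ ↑x) = φ₁ := by
      funext x
      obtain ⟨i, hi⟩ := x
      have hi' : i ∈ (insert ν₁ S : Finset V) := Finset.mem_coe.mp hi
      simp only [hΦdef, dif_pos hi']
    have hΦν : Φ ν₁ = φ₂' ⟨ν₁, hm₂⟩ := by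
      have : Φ ν₁ = φ₁ ⟨ν₁, hm₁⟩ := by
        simp only [hΦdef, dif_pos (Finset.mem_insert_self ν₁ S)]
      rw [this, hφ₂', hc]
      simp
    have hΦ₂ : (fun x : ↥(↑(insert ν₁ S') : Set V) => Φ ↑x) = φ₂' := by
      funext x
      obtain ⟨i, hi⟩ := x
      have hi' : i ∈ (insert ν₁ S' : Finset V) := Finset.mem_coe.mp hi
      rcases Finset.mem_insert.mp hi' with rfl | hiS'
      · exact hΦν
      · have hnot : i ∉ (insert ν₁ S : Finset V) := by
          intro hmem
          rcases Finset.mem_insert.mp hmem with rfl | hiS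
          · exact hν₁S' hiS'
          · exact (Finset.disjoint_left.mp hdisj) hiS hiS'
        simp only [hΦdef, dif_neg hnot]
    rw [← hΦ₁] at h₁
    rw [← hΦ₂] at h₂'
    obtain ⟨hSeq, hSid⟩ := (side_iff G ω k ν₁ S hν₁S hclosedS Φ).mp h₁
    obtain ⟨hS'eq, hS'id⟩ := (side_iff G ω k ν₁ S' hν₁S' hclosedS' Φ).mp h₂'
    refine ⟨Φ, fun i => ?_⟩
    by_cases hi : i = ν₁
    · subst hi
      have huniv : Finset.univ.filter (fun j => G.Adj i j)
          = S.filter (fun j => G.Adj i j) ∪ S'.filter (fun j => G.Adj i j) := by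
        ext j
        simp only [Finset.mem_filter, Finset.mem_univ, true_and, Finset.mem_union]
        constructor
        · intro h
          rcases hpart j (Ne.symm (G.ne_of_adj h)) with hj | hj
          · exact Or.inl ⟨hj, h⟩
          · exact Or.inr ⟨hj, h⟩
        · rintro (⟨_, h⟩ | ⟨_, h⟩) <;> exact h
      have hdisjf : Disjoint (S.filter (fun j => G.Adj i j))
          (S'.filter (fun j => G.Adj i j)) := Finset.disjoint_filter_filter hdisj
      have h0 : ∑ j, (ω j - kuramotoMean ω) = 0 := by
        have hc0 : (Fintype.card V : ℝ) ≠ 0 :=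
          Nat.cast_ne_zero.mpr (@Fintype.card_ne_zero V _ ⟨i⟩)
        rw [Finset.sum_sub_distrib, Finset.sum_const, Finset.card_univ, nsmul_eq_mul,
          kuramotoMean]
        field_simp
        ring
      have huniv2 : (Finset.univ : Finset V) = insert i (S ∪ S') := by
        ext j
        simp only [Finset.mem_univ, Finset.mem_insert, Finset.mem_union, true_iff]
        by_cases hj : j = i
        · exact Or.inl hj
        · exact Or.inr (hpart j hj)
      rw [huniv2, Finset.sum_insert (by simp [hν₁S, hν₁S']),
        Finset.sum_union hdisj] at h0
      rw [huniv, Finset.sum_union hdisjf, mul_add]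
      linarith [hSid, hS'id, h0]
    · rcases hpart i hi with hiS | hiS'
      · exact hSeq i hiS
      · exact hS'eq i hiS'
end

section
/- Let T be a finite tree with at least two vertices, equipped with frequencies ω, and let 0 ≤ k ≤ k′. If T has a frequency fixed point at coupling k, then T has a frequency fixed point at coupling k′; that is, for trees the set of nonnegative couplings admitting a frequency fixed point is upward closed. -/
open scoped Classical

/-- Sum of an antisymmetric edge weight along the darts of a walk. -/
noncomputable def wsum {V : Type*} {G : SimpleGraph V} (d : V → V → ℝ) :
    ∀ {a b : V}, G.Walk a b → ℝ
  | _, _, SimpleGraph.Walk.nil => 0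
  | _, _, @SimpleGraph.Walk.cons _ _ a c _ _ p => d a c + wsum d p

lemma wsum_append {V : Type*} {G : SimpleGraph V} (d : V → V → ℝ) {a b c : V}
    (p : G.Walk a b) (q : G.Walk b c) :
    wsum d (p.append q) = wsum d p + wsum d q := by
  induction p with
  | nil => simp [wsum]
  | cons h p ih => simp [wsum, ih]; ring

/-- For trees, the set of nonnegative couplings admitting a frequency fixed point is
upward closed: if `0 ≤ k ≤ k'` and the tree `T` has a frequency fixed point at coupling
`k`, then it has one at coupling `k'`. -/
theorem tree_fixed_point_monotone {V : Type*} [Fintype V] (T : SimpleGraph V)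
    (hT : T.IsTree) (hcard : 2 ≤ Fintype.card V) (ω : V → ℝ) (k k' : ℝ)
    (hk : 0 ≤ k) (hkk' : k ≤ k') (h : ∃ φ, IsFreqFixedPoint T ω k φ) :
    ∃ φ, IsFreqFixedPoint T ω k' φ := by
  obtain ⟨φ, hφ⟩ := h
  rcases eq_or_lt_of_le (hk.trans hkk') with hk0 | hk'pos
  · -- k' = 0, hence k = 0 = k', reuse φ
    obtain rfl : k = k' := le_antisymm hkk' (hk0 ▸ hk)
    exact ⟨φ, hφ⟩
  -- k' > 0
  set c : ℝ := k / k' with hc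
  have hc0 : 0 ≤ c := div_nonneg hk hk'pos.le
  have hc1 : c ≤ 1 := (div_le_one hk'pos).mpr hkk'
  set d : V → V → ℝ := fun i j => Real.arcsin (c * Real.sin (φ j - φ i)) with hd
  have hbound : ∀ i j : V, -1 ≤ c * Real.sin (φ j - φ i) ∧ c * Real.sin (φ j - φ i) ≤ 1 := by
    intro i j
    have h1 : |c * Real.sin (φ j - φ i)| ≤ 1 := by
      rw [abs_mul]
      calc |c| * |Real.sin (φ j - φ i)| ≤ 1 * 1 := by
            apply mul_le_mul (by rwa [abs_of_nonneg hc0]) (Real.abs_sin_le_one _)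
              (abs_nonneg _) zero_le_one
        _ = 1 := one_mul 1
    exact abs_le.mp h1
  have hsin_d : ∀ i j : V, Real.sin (d i j) = c * Real.sin (φ j - φ i) := fun i j =>
    Real.sin_arcsin (hbound i j).1 (hbound i j).2
  have hd_anti : ∀ i j : V, d j i = - d i j := by
    intro i j
    simp only [hd]
    rw [← Real.arcsin_neg]
    congr 1
    have hx : φ i - φ j = -(φ j - φ i) := by ring
    rw [hx, Real.sin_neg]
    ring
  -- pick a root
  have : Nonempty V := Fintype.card_pos_iff.mp (by omega)
  obtain ⟨r⟩ := this
  -- unique path from r to each vertex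
  have hpath := hT.existsUnique_path
  set p : ∀ i : V, T.Walk r i := fun i => (hpath r i).choose with hp
  have hp_isPath : ∀ i, (p i).IsPath := fun i => (hpath r i).choose_spec.1
  set φ' : V → ℝ := fun i => wsum d (p i) with hφ'
  -- key: for adjacent i j, φ' j - φ' i = d i j
  have key : ∀ i j : V, T.Adj i j → φ' j = φ' i + d i j := by
    intro i j hadj
    by_cases hjs : j ∈ (p i).support
    · -- p i passes through j; its tail from j must be the single edge j-i
      have hsplit := ((p i).take_spec hjs).symm
      have htake : ((p i).takeUntil j hjs).IsPath := (hp_isPath i).takeUntil hjs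
      have hdrop : ((p i).dropUntil j hjs).IsPath := (hp_isPath i).dropUntil hjs
      have hedge : (SimpleGraph.Walk.cons hadj.symm SimpleGraph.Walk.nil :
          T.Walk j i).IsPath := by simp [hadj.ne']
      have hdeq : (p i).dropUntil j hjs =
          SimpleGraph.Walk.cons hadj.symm SimpleGraph.Walk.nil := by
        have h1 := (hpath j i).unique hdrop hedge
        exact h1
      have hteq : (p i).takeUntil j hjs = p j := (hpath r j).unique htake (hp_isPath j)
      have : wsum d (p i) = wsum d (p j) + d j i := by
        conv_lhs => rw [hsplit]
        rw [wsum_append, hteq, hdeq]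
        simp [wsum]
      simp only [hφ']
      rw [this, hd_anti i j]
      ring
    · -- extend p i by the edge i-j
      have hconc : ((p i).concat hadj).IsPath := by
        rw [← SimpleGraph.Walk.isPath_reverse_iff, SimpleGraph.Walk.reverse_concat]
        exact (hp_isPath i).reverse.cons (by
          rwa [SimpleGraph.Walk.support_reverse, List.mem_reverse])
      have hceq : (p i).concat hadj = p j := (hpath r j).unique hconc (hp_isPath j)
      simp only [hφ']
      rw [← hceq, SimpleGraph.Walk.concat_eq_append, wsum_append]
      simp [wsum]
  refine ⟨φ', fun i => ?_⟩
  have hsum : ∀ j ∈ Finset.univ.filter (fun j => T.Adj i j),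
      Real.sin (φ' j - φ' i) = c * Real.sin (φ j - φ i) := by
    intro j hj
    rw [Finset.mem_filter] at hj
    rw [key i j hj.2]
    simp [hsin_d i j]
  rw [Finset.sum_congr rfl hsum, ← Finset.mul_sum, ← mul_assoc]
  have : k' * c = k := by rw [hc]; field_simp [hk'pos.ne']
  rw [this]
  exact hφ i
end

section
/- Let ω₁, …, ω_n (n ≥ 1) be real numbers with mean ω̄, maximum ω_max, and minimum ω_min. Then there exists a permutation a of {1, …, n} such that, writing f(j) = Σ_{i=1}^{j} (ω_{a(i)} − ω̄), one has ω_min − ω̄ ≤ f(j) ≤ ω_max − ω̄ for all 1 ≤ j ≤ n (and f(n) = 0). Consequently, for all 1 ≤ m ≤ m + r ≤ n, |f(m + r) − f(m)| ≤ ω_max − ω_min. -/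
open Finset

/-- The prefix sum `f(j) = ∑_{i=1}^{j} (ω_{a(i)} - ω̄)` of frequency deviations from the
mean, taken along the ordering given by the permutation `a` (positions `0, …, j-1`). -/
noncomputable def prefixDevSum (n : ℕ) (ω : Fin n → ℝ) (a : Equiv.Perm (Fin n))
    (j : ℕ) : ℝ :=
  ∑ i ∈ Finset.univ.filter (fun i : Fin n => (i : ℕ) < j),
    (ω (a i) - (∑ t, ω t) / n)

/-- The maximum `ω_max` of the frequencies. -/
noncomputable def freqMax (n : ℕ) (hn : 1 ≤ n) (ω : Fin n → ℝ) : ℝ :=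
  Finset.univ.sup' ⟨⟨0, hn⟩, Finset.mem_univ _⟩ ω

/-- The minimum `ω_min` of the frequencies. -/
noncomputable def freqMin (n : ℕ) (hn : 1 ≤ n) (ω : Fin n → ℝ) : ℝ :=
  Finset.univ.inf' ⟨⟨0, hn⟩, Finset.mem_univ _⟩ ω

/-- Greedy construction: from any remaining index set `s` with running sum `c` in `[L, U]`
and total zero, we can order `s` so that all partial sums stay in `[L, U]`. -/
lemma greedy_aux {n : ℕ} (d : Fin n → ℝ) (L U : ℝ)
    (hL : ∀ i, L ≤ d i) (hU : ∀ i, d i ≤ U) :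
    ∀ (k : ℕ) (s : Finset (Fin n)) (c : ℝ), s.card = k → L ≤ c → c ≤ U →
      c + ∑ i ∈ s, d i = 0 →
      ∃ l : List (Fin n), l.Nodup ∧ (∀ i, i ∈ l ↔ i ∈ s) ∧
        ∀ m : ℕ, L ≤ c + ((l.take m).map d).sum ∧ c + ((l.take m).map d).sum ≤ U := by
  intro k
  induction k with
  | zero =>
    intro s c hcard hLc hcU _
    refine ⟨[], by simp, ?_, ?_⟩
    · simp [Finset.card_eq_zero.mp hcard]
    · intro m; simp [hLc, hcU]
  | succ k ih =>
    intro s c hcard hLc hcU hsum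
    have hne : s.Nonempty := Finset.card_pos.mp (by omega)
    have key : ∃ i ∈ s, L ≤ c + d i ∧ c + d i ≤ U := by
      rcases le_or_gt c 0 with hc | hc
      · have hsge : (0:ℝ) ≤ ∑ i ∈ s, d i := by linarith
        obtain ⟨i, hi, hdi⟩ := Finset.exists_le_of_sum_le (f := fun _ => (0:ℝ)) (g := d)
          hne (by simpa using hsge)
        exact ⟨i, hi, by linarith [hL i], by linarith [hU i]⟩
      · have hsle : ∑ i ∈ s, d i ≤ 0 := by linarith
        obtain ⟨i, hi, hdi⟩ := Finset.exists_le_of_sum_le (f := d) (g := fun _ => (0:ℝ))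
          hne (by simpa using hsle)
        exact ⟨i, hi, by linarith [hL i], by linarith [hU i]⟩
    obtain ⟨i, hi, h1, h2⟩ := key
    have hsum' : (c + d i) + ∑ j ∈ s.erase i, d j = 0 := by
      rw [add_assoc, Finset.add_sum_erase s d hi]; exact hsum
    obtain ⟨l, hnd, hmem, hpre⟩ := ih (s.erase i) (c + d i)
      (by simp [Finset.card_erase_of_mem hi, hcard]) h1 h2 hsum'
    refine ⟨i :: l, ?_, ?_, ?_⟩
    · refine List.nodup_cons.mpr ⟨fun hmem' => ?_, hnd⟩
      exact (Finset.notMem_erase i s) ((hmem i).mp hmem')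
    · intro j
      simp only [List.mem_cons, hmem, Finset.mem_erase]
      constructor
      · rintro (rfl | ⟨_, hj⟩); exacts [hi, hj]
      · intro hj
        by_cases hji : j = i
        · exact Or.inl hji
        · exact Or.inr ⟨hji, hj⟩
    · intro m
      cases m with
      | zero => simpa using ⟨hLc, hcU⟩
      | succ m =>
        have := hpre m
        constructor <;> · simp only [List.take_succ_cons, List.map_cons, List.sum_cons,
            ← add_assoc]; linarith [this.1, this.2]

/-- Rearrangement with bounded prefix sums: for any reals `ω₁, …, ω_n` (`n ≥ 1`) with
mean `ω̄`, there is a permutation `a` such that every prefix sum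
`f(j) = ∑_{i=1}^{j} (ω_{a(i)} - ω̄)` satisfies `ω_min - ω̄ ≤ f(j) ≤ ω_max - ω̄`, with
`f(n) = 0`; consequently `|f(m+r) - f(m)| ≤ ω_max - ω_min` whenever
`1 ≤ m ≤ m + r ≤ n`. -/
theorem rearrangement_bounded_prefix_sums (n : ℕ) (hn : 1 ≤ n) (ω : Fin n → ℝ) :
    ∃ a : Equiv.Perm (Fin n),
      (∀ j : ℕ, 1 ≤ j → j ≤ n →
          freqMin n hn ω - (∑ t, ω t) / n ≤ prefixDevSum n ω a j ∧
          prefixDevSum n ω a j ≤ freqMax n hn ω - (∑ t, ω t) / n) ∧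
      prefixDevSum n ω a n = 0 ∧
      (∀ m r : ℕ, 1 ≤ m → m + r ≤ n →
          |prefixDevSum n ω a (m + r) - prefixDevSum n ω a m| ≤
            freqMax n hn ω - freqMin n hn ω) := by
  have hnpos : (0:ℝ) < n := by exact_mod_cast Nat.lt_of_lt_of_le Nat.zero_lt_one hn
  set μ : ℝ := (∑ t, ω t) / n with hμ
  set L : ℝ := freqMin n hn ω - μ with hLdef
  set U : ℝ := freqMax n hn ω - μ with hUdef
  have hL : ∀ i, L ≤ ω i - μ := fun i =>
    sub_le_sub_right (Finset.inf'_le _ (Finset.mem_univ i)) μ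
  have hU : ∀ i, ω i - μ ≤ U := fun i =>
    sub_le_sub_right (Finset.le_sup' _ (Finset.mem_univ i)) μ
  have hdevsum : ∑ i, (ω i - μ) = 0 := by
    rw [Finset.sum_sub_distrib, Finset.sum_const, Finset.card_univ, Fintype.card_fin,
      nsmul_eq_mul, hμ]
    field_simp
    ring
  have hL0 : L ≤ 0 := by
    have h := Finset.sum_le_sum (s := Finset.univ) (fun i _ => hL i)
    rw [hdevsum, Finset.sum_const, Finset.card_univ, Fintype.card_fin, nsmul_eq_mul] at h
    nlinarith
  have hU0 : (0:ℝ) ≤ U := by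
    have h := Finset.sum_le_sum (s := Finset.univ) (fun i _ => hU i)
    rw [hdevsum, Finset.sum_const, Finset.card_univ, Fintype.card_fin, nsmul_eq_mul] at h
    nlinarith
  obtain ⟨l, hnd, hmem, hpre⟩ := greedy_aux (fun i => ω i - μ) L U hL hU n Finset.univ 0
    (by simp) hL0 hU0 (by simpa using hdevsum)
  have hlmem : ∀ i, i ∈ l := fun i => (hmem i).mpr (Finset.mem_univ i)
  have htofin : l.toFinset = Finset.univ := by
    ext i; simp [hlmem i]
  have hlen : l.length = n := by
    rw [← List.toFinset_card_of_nodup hnd, htofin, Finset.card_univ, Fintype.card_fin]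
  set g : Fin n → Fin n := fun i => l.get (Fin.cast hlen.symm i) with hg
  have hginj : Function.Injective g :=
    (List.nodup_iff_injective_get.mp hnd).comp (Fin.cast_injective _)
  set a : Equiv.Perm (Fin n) := Equiv.ofBijective g (Finite.injective_iff_bijective.mp hginj)
    with ha
  have key : ∀ j, prefixDevSum n ω a j = ((l.take j).map (fun i => ω i - μ)).sum := by
    intro j
    induction j with
    | zero => simp [prefixDevSum]
    | succ j ihj =>
      by_cases hj : j < n
      · have hjl : j < l.length := by omega
        have hfilt : Finset.univ.filter (fun i : Fin n => (i:ℕ) < j+1)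
            = insert (⟨j, hj⟩ : Fin n) (Finset.univ.filter (fun i : Fin n => (i:ℕ) < j)) := by
          ext i
          simp only [Finset.mem_filter, Finset.mem_univ, true_and, Finset.mem_insert,
            Fin.ext_iff]
          omega
        have hnotmem : (⟨j, hj⟩ : Fin n) ∉ Finset.univ.filter (fun i : Fin n => (i:ℕ) < j) := by
          simp
        have htake : l.take (j+1) = l.take j ++ [l.get ⟨j, hjl⟩] := by
          rw [List.take_succ, List.getElem?_eq_getElem hjl]
          simp
        have haj : a (⟨j, hj⟩ : Fin n) = l.get ⟨j, hjl⟩ := rfl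
        rw [prefixDevSum, hfilt, Finset.sum_insert hnotmem, htake, List.map_append,
          List.sum_append]
        have e3 : ∑ i ∈ Finset.univ.filter (fun i : Fin n => (i:ℕ) < j),
            (ω (a i) - (∑ t, ω t)/n) = prefixDevSum n ω a j := rfl
        rw [e3, ihj, haj]
        simp only [List.map_cons, List.map_nil, List.sum_cons, List.sum_nil]
        rw [← hμ]
        ring
      · have e1 : Finset.univ.filter (fun i : Fin n => (i:ℕ) < j+1) = Finset.univ :=
          Finset.filter_true_of_mem (fun i _ => lt_of_lt_of_le i.isLt (by omega))
        have e2 : Finset.univ.filter (fun i : Fin n => (i:ℕ) < j) = Finset.univ :=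
          Finset.filter_true_of_mem (fun i _ => lt_of_lt_of_le i.isLt (by omega))
        have e3 : prefixDevSum n ω a (j+1) = prefixDevSum n ω a j := by
          rw [prefixDevSum, prefixDevSum, e1, e2]
        rw [e3, ihj, List.take_of_length_le (by omega), List.take_of_length_le (by omega)]
  refine ⟨a, ?_, ?_, ?_⟩
  · intro j _ _
    obtain ⟨p1, p2⟩ := hpre j
    rw [zero_add] at p1 p2
    constructor <;> rw [key j]
    · exact p1
    · exact p2
  · have e1 : Finset.univ.filter (fun i : Fin n => (i:ℕ) < n) = Finset.univ :=
      Finset.filter_true_of_mem (fun i _ => i.isLt)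
    rw [prefixDevSum, e1]
    have hc : ∑ i, (ω (a i) - (∑ t, ω t)/n) = ∑ i, (ω i - (∑ t, ω t)/n) :=
      Equiv.sum_comp a (fun i => ω i - (∑ t, ω t)/n)
    rw [hc]
    simp only [hμ] at hdevsum
    exact hdevsum
  · intro m r hm hmr
    obtain ⟨p1, p2⟩ := hpre (m + r)
    obtain ⟨q1, q2⟩ := hpre m
    rw [zero_add] at p1 p2 q1 q2
    rw [key (m+r), key m, abs_le]
    constructor <;> linarith [hLdef, hUdef]
end

section
/- Let T be a finite tree on n ≥ 2 vertices and let ω₁, …, ω_n ∈ ℝ be a collection of natural frequencies, with maximum ω_max and minimum ω_min. Then there exists a bijective assignment a of the frequencies ω₁, …, ω_n to the vertices of T such that the resulting Kuramoto tree T^a has critical coupling k_c(T^a) ≤ ω_max − ω_min; equivalently, T^a has a frequency fixed point at every coupling k ≥ ω_max − ω_min. -/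
open scoped Classical

namespace KuraAux

lemma cons_le_cons_iff {a b : ℕ} {l m : List ℕ} :
    (a::l) ≤ (b::m) ↔ a < b ∨ (a = b ∧ l ≤ m) := by
  constructor
  · intro h
    rcases le_iff_lt_or_eq.1 h with h | h
    · have h' : List.Lex (·<·) (a::l) (b::m) := h
      cases h' with
      | cons h'' => exact Or.inr ⟨rfl, le_of_lt h''⟩
      | rel h'' => exact Or.inl h''
    · injection h with h1 h2; exact Or.inr ⟨h1, le_of_eq h2⟩
  · intro h
    rcases h with h | ⟨rfl, h⟩
    · exact le_of_lt (List.Lex.rel h)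
    · exact List.cons_le_cons a h

lemma not_cons_le_nil (a : ℕ) (l : List ℕ) : ¬ ((a::l) ≤ ([] : List ℕ)) := by
  intro h
  rcases le_iff_lt_or_eq.1 h with h | h
  · have h' : List.Lex (·<·) (a::l) ([] : List ℕ) := h
    cases h'
  · cases h

lemma prefix_le : ∀ (P A : List ℕ), P <+: A → P ≤ A := by
  intro P
  induction P with
  | nil => intro A _; exact (match A with | [] => le_rfl | _ :: _ => le_of_lt List.Lex.nil)
  | cons a P ih =>
    intro A hA
    obtain ⟨t, rfl⟩ := hA
    exact cons_le_cons_iff.2 (Or.inr ⟨rfl, ih _ (List.prefix_append P t)⟩)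

lemma prefix_of_between : ∀ (P A B C : List ℕ), P <+: A → P <+: C → A ≤ B → B ≤ C → P <+: B := by
  intro P
  induction P with
  | nil => intro A B C _ _ _ _; exact List.nil_prefix
  | cons a P ih =>
    intro A B C hA hC hAB hBC
    obtain ⟨tA, rfl⟩ := hA
    obtain ⟨tC, rfl⟩ := hC
    cases B with
    | nil => exact absurd hAB (not_cons_le_nil _ _)
    | cons b B' =>
      rcases cons_le_cons_iff.1 hAB with h1 | ⟨rfl, h1⟩
      · rcases cons_le_cons_iff.1 hBC with h2 | ⟨rfl, h2⟩
        · omega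
        · omega
      · rcases cons_le_cons_iff.1 hBC with h2 | ⟨-, h2⟩
        · omega
        · obtain ⟨t, rfl⟩ := ih (P ++ tA) B' (P ++ tC) (List.prefix_append P tA)
            (List.prefix_append P tC) h1 h2
          exact ⟨t, rfl⟩

end KuraAux


namespace KuraAux

def pkey (p : ℕ → ℕ) (hp : ∀ i, 0 < i → p i < i) (i : ℕ) : List ℕ :=
  if h : i = 0 then [] else pkey p hp (p i) ++ [i]
termination_by i
decreasing_by exact hp i (Nat.pos_of_ne_zero h)

noncomputable def buildPhi (p : ℕ → ℕ) (hp : ∀ i, 0 < i → p i < i) (g : ℕ → ℝ) (i : ℕ) : ℝ :=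
  if h : i = 0 then 0 else buildPhi p hp g (p i) + g i
termination_by i
decreasing_by exact hp i (Nat.pos_of_ne_zero h)

variable {p : ℕ → ℕ} {hp : ∀ i, 0 < i → p i < i}

lemma pkey_zero : pkey p hp 0 = [] := by rw [pkey]; simp

lemma pkey_pos {i : ℕ} (h : i ≠ 0) : pkey p hp i = pkey p hp (p i) ++ [i] := by
  rw [pkey]; simp [h]

lemma buildPhi_zero {g : ℕ → ℝ} : buildPhi p hp g 0 = 0 := by rw [buildPhi]; simp

lemma buildPhi_pos {g : ℕ → ℝ} {i : ℕ} (h : i ≠ 0) :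
    buildPhi p hp g i = buildPhi p hp g (p i) + g i := by
  rw [buildPhi]; simp [h]

lemma pkey_eq_nil_iff {i : ℕ} : pkey p hp i = [] ↔ i = 0 := by
  constructor
  · intro h
    by_contra hi
    rw [pkey_pos hi] at h
    simpa using h
  · rintro rfl; exact pkey_zero

lemma pkey_inj : Function.Injective (pkey p hp) := by
  intro i j h
  by_cases hi : i = 0
  · subst hi
    rw [pkey_zero] at h
    exact (pkey_eq_nil_iff.1 h.symm).symm
  · by_cases hj : j = 0
    · subst hj; rw [pkey_zero] at h; exact absurd h (by simp [pkey_eq_nil_iff, hi])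
    · rw [pkey_pos hi, pkey_pos hj] at h
      have := congrArg List.getLast? h
      rw [List.getLast?_concat, List.getLast?_concat] at this
      exact Option.some_injective _ this

def Desc (p : ℕ → ℕ) (i j : ℕ) : Prop := ∃ m, p^[m] j = i

lemma desc_refl (i : ℕ) : Desc p i i := ⟨0, rfl⟩

variable (hp0 : p 0 = 0)
include hp hp0

lemma iterate_zero_fixed (m : ℕ) : p^[m] 0 = 0 := by
  induction m with
  | zero => rfl
  | succ m ih => rw [Function.iterate_succ_apply, hp0, ih]

lemma p_le (x : ℕ) : p x ≤ x := by
  rcases Nat.eq_zero_or_pos x with rfl | h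
  · exact hp0.le
  · exact (hp x h).le

lemma iterate_le (m x : ℕ) : p^[m] x ≤ x := by
  induction m with
  | zero => simp
  | succ m ih =>
    rw [Function.iterate_succ_apply']
    exact (p_le (hp := hp) hp0 _).trans ih

lemma desc_le {i j : ℕ} (h : Desc p i j) : i ≤ j := by
  obtain ⟨m, rfl⟩ := h; exact iterate_le (hp := hp) hp0 m j

lemma desc_zero (j : ℕ) : Desc p 0 j := by
  induction j using Nat.strong_induction_on with
  | _ j ih =>
    rcases Nat.eq_zero_or_pos j with rfl | h
    · exact desc_refl (p := p) 0
    · obtain ⟨m, hm⟩ := ih (p j) (hp j h)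
      exact ⟨m + 1, by rw [Function.iterate_succ_apply]; exact hm⟩

lemma desc_iff_prefix {i j : ℕ} : Desc p i j ↔ pkey p hp i <+: pkey p hp j := by
  constructor
  · rintro ⟨m, rfl⟩
    induction m generalizing j with
    | zero => simp
    | succ m ih =>
      rcases Nat.eq_zero_or_pos j with rfl | h
      · rw [Function.iterate_succ_apply, hp0, iterate_zero_fixed (hp := hp) hp0]
      · rw [Function.iterate_succ_apply]
        exact (ih (j := p j)).trans
          (by rw [pkey_pos (show j ≠ 0 by omega)]; exact List.prefix_append _ _)
  · intro h
    induction j using Nat.strong_induction_on with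
    | _ j ih =>
      rcases Nat.eq_zero_or_pos j with rfl | hj
      · rw [pkey_zero] at h
        have h0 : i = 0 := pkey_eq_nil_iff.1 (List.prefix_nil.1 h)
        exact h0 ▸ desc_refl (p := p) 0
      · rw [pkey_pos (by omega : j ≠ 0)] at h
        rcases List.prefix_concat_iff.1 h with h' | h'
        · have hij : i = j := by
            apply pkey_inj (p := p) (hp := hp)
            rw [h', pkey_pos (show j ≠ 0 by omega)]
          exact hij ▸ desc_refl (p := p) j
        · obtain ⟨m, hm⟩ := ih (p j) (hp j hj) h'
          exact ⟨m + 1, by rw [Function.iterate_succ_apply]; exact hm⟩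


-- child decomposition
lemma desc_child {i j : ℕ} (h : Desc p i j) (hne : j ≠ i) :
    ∃ c, c ≠ 0 ∧ p c = i ∧ c ≠ i ∧ Desc p c j := by
  have hex : ∃ m, p^[m] j = i := h
  classical
  let m0 := Nat.find hex
  have hm0 : p^[m0] j = i := Nat.find_spec hex
  have hm0ne : m0 ≠ 0 := by
    intro h0
    rw [h0] at hm0
    exact hne hm0
  refine ⟨p^[m0 - 1] j, ?_, ?_, ?_, ⟨m0 - 1, rfl⟩⟩
  · intro hc0
    have : p^[m0] j = 0 := by
      rw [show m0 = (m0 - 1) + 1 by omega, Function.iterate_succ_apply', hc0, hp0]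
    have hi0 : i = 0 := by rw [← hm0, this]
    exact Nat.find_min hex (show m0 - 1 < m0 by omega) (by rw [hc0, hi0])
  · rw [show m0 = (m0 - 1) + 1 by omega] at hm0
    rw [← Function.iterate_succ_apply' p (m0 - 1) j]
    exact hm0
  · intro hceq
    exact Nat.find_min hex (show m0 - 1 < m0 by omega) hceq

lemma desc_of_child_desc {i c j : ℕ} (hc : p c = i) (h : Desc p c j) : Desc p i j := by
  obtain ⟨m, hm⟩ := h
  exact ⟨m + 1, by rw [Function.iterate_succ_apply', hm, hc]⟩

lemma desc_disjoint_aux {i c c' j m m' : ℕ} (hc : p c = i) (hc' : p c' = i) (h0' : c' ≠ 0)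
    (hm : p^[m] j = c) (hm' : p^[m'] j = c') (hmm : m < m') : False := by
  obtain ⟨d, hd⟩ : ∃ d, m' - m = d + 1 := ⟨m' - m - 1, by omega⟩
  have key : p^[m' - m] c = c' := by
    rw [← hm, ← Function.iterate_add_apply, show m' - m + m = m' by omega, hm']
  rw [hd, Function.iterate_succ_apply, hc] at key
  have hle : c' ≤ i := by rw [← key]; exact iterate_le (hp := hp) hp0 _ _
  have : i < c' := by rw [← hc']; exact hp c' (Nat.pos_of_ne_zero h0')
  omega

lemma desc_disjoint {i c c' j : ℕ} (hc : p c = i) (hc' : p c' = i) (h0 : c ≠ 0) (h0' : c' ≠ 0)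
    (hne : c ≠ c') (h1 : Desc p c j) (h2 : Desc p c' j) : False := by
  obtain ⟨m, hm⟩ := h1
  obtain ⟨m', hm'⟩ := h2
  rcases Nat.lt_trichotomy m m' with h | h | h
  · exact desc_disjoint_aux (hp := hp) hp0 hc hc' h0' hm hm' h
  · exact hne (by rw [← hm, ← hm', h])
  · exact desc_disjoint_aux (hp := hp) hp0 hc' hc h0 hm' hm h

lemma not_desc_child_self {i c : ℕ} (hc : p c = i) (h0 : c ≠ 0) (h : Desc p c i) : False := by
  have h1 : c ≤ i := by obtain ⟨m, hm⟩ := h; rw [← hm]; exact iterate_le (hp := hp) hp0 _ _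
  have h2 : i < c := by rw [← hc]; exact hp c (Nat.pos_of_ne_zero h0)
  omega


end KuraAux


namespace KuraAux

lemma greedy {V : Type*} [DecidableEq V] (w : V → ℝ) (A B : ℝ) :
    ∀ (s : Finset V) (c : ℝ), A ≤ c → c ≤ B → (∀ v ∈ s, A ≤ w v ∧ w v ≤ B) →
    c + ∑ v ∈ s, w v = 0 →
    ∃ l : List V, l.Nodup ∧ l.toFinset = s ∧
      ∀ m : ℕ, A ≤ c + ((l.take m).map w).sum ∧ c + ((l.take m).map w).sum ≤ B := by
  intro s
  induction s using Finset.strongInduction with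
  | _ s ih =>
    intro c hAc hcB hw hsum
    rcases Finset.eq_empty_or_nonempty s with rfl | hne
    · exact ⟨[], by simp, by simp, fun m => by simpa using ⟨hAc, hcB⟩⟩
    · have hpick : ∃ v ∈ s, (c ≤ 0 → 0 ≤ w v) ∧ (0 < c → w v ≤ 0) := by
        rcases le_or_gt c 0 with hc | hc
        · have hex : ∃ v ∈ s, 0 ≤ w v := by
            by_contra hcon
            push_neg at hcon
            have : ∑ v ∈ s, w v < 0 := Finset.sum_neg hcon hne
            linarith
          obtain ⟨v, hv, h⟩ := hex
          exact ⟨v, hv, fun _ => h, fun hc2 => absurd hc2 (not_lt.2 hc)⟩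
        · have hex : ∃ v ∈ s, w v ≤ 0 := by
            by_contra hcon
            push_neg at hcon
            have : 0 < ∑ v ∈ s, w v := Finset.sum_pos hcon hne
            linarith
          obtain ⟨v, hv, h⟩ := hex
          exact ⟨v, hv, fun hc2 => absurd hc (not_lt.2 hc2), fun _ => h⟩
      obtain ⟨v, hv, hv1, hv2⟩ := hpick
      have hc' : A ≤ c + w v ∧ c + w v ≤ B := by
        rcases le_or_gt c 0 with hc | hc
        · have := hv1 hc
          constructor
          · linarith
          · linarith [(hw v hv).2]
        · have := hv2 hc
          constructor
          · linarith [(hw v hv).1]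
          · linarith
      obtain ⟨l', hnd, htf, hps⟩ := ih (s.erase v) (Finset.erase_ssubset hv) (c + w v)
        hc'.1 hc'.2 (fun u hu => hw u (Finset.mem_of_mem_erase hu))
        (by have := Finset.sum_erase_add s w hv; linarith)
      refine ⟨v :: l', ?_, ?_, ?_⟩
      · refine List.nodup_cons.2 ⟨?_, hnd⟩
        intro hmem
        have : v ∈ s.erase v := htf ▸ List.mem_toFinset.2 hmem
        simp at this
      · rw [List.toFinset_cons, htf, Finset.insert_erase hv]
      · intro m
        cases m with
        | zero => simpa using ⟨hAc, hcB⟩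
        | succ m =>
          simpa [add_assoc] using hps m

end KuraAux


namespace KuraAux

open SimpleGraph

lemma tree_structure {V : Type*} [Fintype V] (T : SimpleGraph V) (hT : T.IsTree) (r : V) :
    ∃ P : V → V,
      (∀ v, v ≠ r → T.Adj (P v) v ∧ T.dist r (P v) + 1 = T.dist r v) ∧
      (∀ u v, T.Adj u v ↔ (u ≠ r ∧ P u = v) ∨ (v ≠ r ∧ P v = u)) := by
  have hconn := hT.isConnected
  -- parent existence
  have hpar : ∀ v : V, v ≠ r → ∃ u, T.Adj u v ∧ T.dist r u + 1 = T.dist r v := by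
    intro v hv
    obtain ⟨wk, hwk⟩ := (hconn.preconnected r v).exists_walk_length_eq_dist
    have hd0 : T.dist r v ≠ 0 := fun h => hv ((hconn.dist_eq_zero_iff).1 h).symm
    cases hrev : wk.reverse with
    | nil =>
      exfalso
      have : wk.length = 0 := by
        have := congrArg SimpleGraph.Walk.length hrev
        simpa using this
      rw [hwk] at this
      exact hd0 this
    | cons h q =>
      rename_i u
      -- h : T.Adj v u, q : T.Walk u r
      refine ⟨u, h.symm, ?_⟩
      have hlen : q.length + 1 = T.dist r v := by
        have := congrArg SimpleGraph.Walk.length hrev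
        simp only [SimpleGraph.Walk.length_reverse, SimpleGraph.Walk.length_cons] at this
        omega
      have h1 : T.dist r u ≤ q.length := by
        have := SimpleGraph.dist_le q.reverse
        simpa using this
      have h2 : T.dist r v ≤ T.dist r u + 1 := by
        calc T.dist r v ≤ T.dist r u + T.dist u v := hconn.dist_triangle
        _ ≤ T.dist r u + 1 := by
            have : T.dist u v ≤ 1 := by
              have := SimpleGraph.dist_le (h.symm.toWalk)
              simpa using this
            omega
      omega
  classical
  set P : V → V := fun v => if h : v = r then r else Classical.choose (hpar v h) with hP
  have hPspec : ∀ v, v ≠ r → T.Adj (P v) v ∧ T.dist r (P v) + 1 = T.dist r v := by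
    intro v hv
    rw [hP]
    simp only [hv, dif_neg]
    exact Classical.choose_spec (hpar v hv)
  refine ⟨P, hPspec, ?_⟩
  -- counting argument
  have hcards : (Finset.univ.filter (fun v => v ≠ r)).card + 1 = Fintype.card V := by
    rw [Finset.filter_ne']
    rw [Finset.card_erase_of_mem (Finset.mem_univ r)]
    have : 1 ≤ Fintype.card V := Fintype.card_pos_iff.2 ⟨r⟩
    simp [Finset.card_univ]
    omega
  have hinj : Set.InjOn (fun v => s(v, P v)) (Finset.univ.filter (fun v => v ≠ r)) := by
    intro u hu v hv huv
    simp only [Finset.coe_filter, Set.mem_setOf_eq, Finset.mem_univ, true_and] at hu hv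
    simp only [Sym2.eq_iff] at huv
    rcases huv with ⟨h1, _⟩ | ⟨h1, h2⟩
    · exact h1
    · exfalso
      have d1 := (hPspec u hu).2
      have d2 := (hPspec v hv).2
      rw [h2] at d1
      rw [← h1] at d2
      omega
  have himage : (Finset.univ.filter (fun v => v ≠ r)).image (fun v => s(v, P v)) = T.edgeFinset := by
    apply Finset.eq_of_subset_of_card_le
    · intro e he
      obtain ⟨v, hv, rfl⟩ := Finset.mem_image.1 he
      simp only [Finset.mem_filter] at hv
      rw [SimpleGraph.mem_edgeFinset]
      exact (hPspec v hv.2).1.symm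
    · rw [Finset.card_image_of_injOn hinj]
      have := hT.card_edgeFinset
      omega
  intro u v
  constructor
  · intro hadj
    have he : s(u, v) ∈ T.edgeFinset := SimpleGraph.mem_edgeFinset.2 hadj
    rw [← himage] at he
    obtain ⟨w, hw, hww⟩ := Finset.mem_image.1 he
    simp only [Finset.mem_filter] at hw
    rw [Sym2.eq_iff] at hww
    rcases hww with ⟨rfl, rfl⟩ | ⟨rfl, rfl⟩
    · exact Or.inl ⟨hw.2, rfl⟩
    · exact Or.inr ⟨hw.2, rfl⟩
  · rintro (⟨hu, rfl⟩ | ⟨hv, rfl⟩)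
    · exact (hPspec u hu).1.symm
    · exact (hPspec v hv).1

end KuraAux



/-- Rearrangement theorem for trees: for any finite tree `T` on at least two vertices
and any collection of natural frequencies `ω`, there is a bijective reassignment `a` of
the frequencies to the vertices for which the resulting Kuramoto tree `T^a` has critical
coupling at most `ω_max - ω_min`; equivalently, `T^a` has a frequency fixed point at
every coupling `k ≥ ω_max - ω_min`. -/
theorem tree_rearrangement_spread_bound {V : Type*} [Fintype V] (T : SimpleGraph V)
    (hT : T.IsTree) (hcard : 2 ≤ Fintype.card V) (ω : V → ℝ) :
    ∃ a : Equiv.Perm V, ∀ k : ℝ,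
      Finset.univ.sup' (Finset.univ_nonempty_iff.mpr
          (Fintype.card_pos_iff.mp (by omega))) ω -
        Finset.univ.inf' (Finset.univ_nonempty_iff.mpr
          (Fintype.card_pos_iff.mp (by omega))) ω ≤ k →
      ∃ φ, IsFreqFixedPoint T (fun i => ω (a i)) k φ := by
  classical
  set n := Fintype.card V with hn
  haveI : NeZero n := ⟨by omega⟩
  have hnV : Nonempty V := Fintype.card_pos_iff.mp (by omega)
  obtain ⟨r⟩ := hnV
  have hune : (Finset.univ : Finset V).Nonempty := ⟨r, Finset.mem_univ r⟩
  obtain ⟨P, hPspec, hAchar⟩ := KuraAux.tree_structure T hT r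
  have hconn := hT.isConnected
  set d : V → ℕ := fun v => T.dist r v with hd
  -- ### depth-sorted enumeration
  set e₀ := Fintype.equivFin V with he₀
  set keyV : V → ℕ ×ₗ Fin n := fun v => toLex (d v, e₀ v) with hkeyV
  have hkeyVinj : Function.Injective keyV := by
    intro u v h
    have h2 : (d u, e₀ u) = (d v, e₀ v) := congrArg ofLex h
    exact e₀.injective (congrArg Prod.snd h2)
  letI : LinearOrder V := LinearOrder.lift' keyV hkeyVinj
  have hcardn : (Finset.univ : Finset V).card = n := by simp [hn]
  set eo := Finset.univ.orderIsoOfFin hcardn with heo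
  set e : Fin n ≃ V := eo.toEquiv.trans (Equiv.subtypeUnivEquiv (fun x => Finset.mem_univ x))
    with he
  have hemono : ∀ i j : Fin n, i ≤ j → keyV (e i) ≤ keyV (e j) := by
    intro i j hij
    exact eo.monotone hij
  have hidx : ∀ u v : V, d u < d v → (e.symm u : Fin n) < e.symm v := by
    intro u v huv
    by_contra hcon
    push_neg at hcon
    have h2 := hemono _ _ hcon
    rw [e.apply_symm_apply, e.apply_symm_apply] at h2
    rcases (Prod.Lex.le_iff).1 h2 with h | h
    · simp only [hkeyV, ofLex_toLex] at h; omega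
    · have := h.1; simp only [hkeyV, ofLex_toLex] at this; omega
  have he0 : e 0 = r := by
    have h0 : keyV (e 0) ≤ keyV r := by
      have := hemono 0 (e.symm r) (Fin.zero_le _)
      rwa [e.apply_symm_apply] at this
    have hdr : d r = 0 := by simp [hd]
    rcases (Prod.Lex.le_iff).1 h0 with h | h
    · exfalso; simp only [hkeyV, ofLex_toLex] at h; omega
    · have h1 : d (e 0) = 0 := by have := h.1; simp only [hkeyV, ofLex_toLex] at this; omega
      have : T.dist r (e 0) = 0 := h1
      exact ((hconn.dist_eq_zero_iff).1 this).symm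
  -- ### abstract parent map
  set pN : ℕ → ℕ := fun m => if h : m < n ∧ m ≠ 0 then (e.symm (P (e ⟨m, h.1⟩))).1 else 0
    with hpNdef
  have hp0 : pN 0 = 0 := by simp [hpNdef]
  have hp : ∀ m, 0 < m → pN m < m := by
    intro m hm
    by_cases h : m < n
    · have hne : (⟨m, h⟩ : Fin n) ≠ 0 := by
        intro hcon
        have := congrArg Fin.val hcon
        simp at this
        omega
      have hvr : e ⟨m, h⟩ ≠ r := fun hcon => hne (by
        rw [← he0] at hcon; exact e.injective hcon)
      have hdp := (hPspec _ hvr).2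
      have hlt := hidx (P (e ⟨m, h⟩)) (e ⟨m, h⟩) (by
        simp only [hd] at hdp ⊢; omega)
      rw [e.symm_apply_apply] at hlt
      have hcond : m < n ∧ m ≠ 0 := ⟨h, by omega⟩
      simp only [hpNdef, dif_pos hcond]
      exact hlt
    · simp only [hpNdef, dif_neg (by omega : ¬(m < n ∧ m ≠ 0))]
      omega
  have hpNval : ∀ i : Fin n, i ≠ 0 → pN i.1 = (e.symm (P (e i))).1 := by
    intro i hi
    have hcond : i.1 < n ∧ i.1 ≠ 0 :=
      ⟨i.2, fun h => hi (Fin.ext (by simp [h]))⟩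
    simp only [hpNdef, dif_pos hcond, Fin.eta]
  have hAdjFin : ∀ i j : Fin n,
      T.Adj (e i) (e j) ↔ ((i ≠ 0 ∧ pN i.1 = j.1) ∨ (j ≠ 0 ∧ pN j.1 = i.1)) := by
    have hhalf : ∀ i j : Fin n, (e i ≠ r ∧ P (e i) = e j) ↔ (i ≠ 0 ∧ pN i.1 = j.1) := by
      intro i j
      constructor
      · rintro ⟨h1, h2⟩
        have hi0 : i ≠ 0 := fun hcon => h1 (by rw [hcon, he0])
        refine ⟨hi0, ?_⟩
        rw [hpNval i hi0, h2, e.symm_apply_apply]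
      · rintro ⟨hi0, h2⟩
        refine ⟨fun hcon => hi0 (e.injective (by rw [he0, hcon])), ?_⟩
        rw [hpNval i hi0] at h2
        have := Fin.val_injective h2
        rw [← this, e.apply_symm_apply]
    intro i j
    rw [hAchar (e i) (e j), hhalf i j, hhalf j i]
  -- ### lex keys and DFS order
  set keyF : Fin n → List ℕ := fun a => KuraAux.pkey pN hp a.1 with hkeyF
  have hkeyFinj : Function.Injective keyF := fun a b h =>
    Fin.val_injective (KuraAux.pkey_inj h)
  set η : Equiv.Perm (Fin n) := Tuple.sort keyF with hη
  have hSM : StrictMono (keyF ∘ η) :=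
    (Tuple.monotone_sort keyF).strictMono_of_injective (hkeyFinj.comp η.injective)
  have hη0 : η 0 = 0 := by
    have h1 : keyF (η 0) ≤ keyF (η (η.symm 0)) := hSM.monotone (Fin.zero_le _)
    rw [η.apply_symm_apply] at h1
    have h2 : keyF 0 = [] := by
      simp only [hkeyF, Fin.val_zero]
      exact KuraAux.pkey_zero
    rw [h2] at h1
    have h3 : keyF (η 0) = [] := le_antisymm h1 (match keyF (η 0) with | [] => le_rfl | _ :: _ => le_of_lt List.Lex.nil)
    exact hkeyFinj (by rw [h3, h2])
  -- ### mean, bounds, greedy assignment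
  set c := kuramotoMean ω with hc
  set w : V → ℝ := fun v => ω v - c with hw
  set A : ℝ := Finset.univ.inf' hune ω - c with hA
  set B : ℝ := Finset.univ.sup' hune ω - c with hB
  have hnR : (0:ℝ) < (n:ℝ) := by positivity
  have hwA : ∀ v, A ≤ w v ∧ w v ≤ B := by
    intro v
    constructor
    · simp only [hA, hw]
      have := Finset.inf'_le ω (Finset.mem_univ v)
      linarith
    · simp only [hB, hw]
      have := Finset.le_sup' ω (Finset.mem_univ v)
      linarith
  have hsumω : ∑ v, ω v = (n:ℝ) * c := by
    rw [hc]
    unfold kuramotoMean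
    rw [← hn]
    field_simp
  have hA0 : A ≤ 0 := by
    have h1 : (n:ℝ) * (Finset.univ.inf' hune ω) ≤ ∑ v, ω v := by
      have := Finset.card_nsmul_le_sum Finset.univ ω (Finset.univ.inf' hune ω)
        (fun v _ => Finset.inf'_le ω (Finset.mem_univ v))
      rw [hcardn] at this
      simpa [nsmul_eq_mul] using this
    rw [hsumω] at h1
    simp only [hA]
    nlinarith
  have hB0 : 0 ≤ B := by
    have h1 : ∑ v, ω v ≤ (n:ℝ) * (Finset.univ.sup' hune ω) := by
      have := Finset.sum_le_card_nsmul Finset.univ ω (Finset.univ.sup' hune ω)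
        (fun v _ => Finset.le_sup' ω (Finset.mem_univ v))
      rw [hcardn] at this
      simpa [nsmul_eq_mul] using this
    rw [hsumω] at h1
    simp only [hB]
    nlinarith
  have hsumw : (0:ℝ) + ∑ v, w v = 0 := by
    simp only [hw, Finset.sum_sub_distrib, hsumω, Finset.sum_const, hcardn, nsmul_eq_mul]
    ring
  obtain ⟨l, hnd, htf, hps⟩ := KuraAux.greedy w A B Finset.univ 0 hA0 hB0
    (fun v _ => hwA v) hsumw
  have hlen : l.length = n := by
    have h1 := List.toFinset_card_of_nodup hnd
    rw [htf, hcardn] at h1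
    omega
  set γfun : Fin n → V := fun b => l.get ⟨b.1, by rw [hlen]; exact b.2⟩ with hγfun
  have hγinj : Function.Injective γfun := by
    intro a b h
    have h2 := (List.nodup_iff_injective_get).1 hnd h
    have h3 := congrArg Fin.val h2
    exact Fin.ext h3
  have hγbij : Function.Bijective γfun :=
    (Fintype.bijective_iff_injective_and_card γfun).2 ⟨hγinj, by simp [hn]⟩
  set γ : Fin n ≃ V := Equiv.ofBijective γfun hγbij with hγ
  set y : Fin n → ℝ := fun b => w (γ b) with hy
  set Psum : ℕ → ℝ := fun m => ((l.take m).map w).sum with hPsum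
  have hPsumbd : ∀ m, A ≤ Psum m ∧ Psum m ≤ B := by
    intro m
    have := hps m
    simpa [hPsum] using this
  have hPsumEq : ∀ m, m ≤ n →
      Psum m = ∑ b ∈ Finset.univ.filter (fun b : Fin n => b.1 < m), y b := by
    intro m
    induction m with
    | zero => intro _; simp [hPsum]
    | succ m ih =>
      intro hm
      have hmn : m < n := by omega
      have hml : m < l.length := by rw [hlen]; omega
      have hmapl : m < (l.map w).length := by rw [List.length_map]; omega
      have h1 : Psum (m+1) = Psum m + w (l.get ⟨m, hml⟩) := by
        simp only [hPsum, List.map_take]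
        rw [List.sum_take_succ (l.map w) m hmapl]
        congr 1
        simp
      have h2 : Finset.univ.filter (fun b : Fin n => b.1 < m + 1)
          = insert ⟨m, hmn⟩ (Finset.univ.filter (fun b : Fin n => b.1 < m)) := by
        ext b
        simp only [Finset.mem_filter, Finset.mem_univ, true_and, Finset.mem_insert, Fin.ext_iff]
        omega
      rw [h1, h2, Finset.sum_insert (by simp), ih (by omega)]
      have h3 : y ⟨m, hmn⟩ = w (l.get ⟨m, hml⟩) := rfl
      rw [h3]
      ring
  -- ### subtree sums
  set S : ℕ → ℝ := fun i =>
    ∑ j ∈ Finset.univ.filter (fun j : Fin n => KuraAux.Desc pN i j.1), y (η.symm j) with hS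
  have hSbound : ∀ i : Fin n, |S i.1| ≤ B - A := by
    intro i
    set D : Finset (Fin n) :=
      Finset.univ.filter (fun j : Fin n => KuraAux.Desc pN i.1 j.1) with hD
    set Dm : Finset (Fin n) := D.image η.symm with hDm
    have hiD : i ∈ D := by
      simp only [hD, Finset.mem_filter, Finset.mem_univ, true_and]
      exact KuraAux.desc_refl (p := pN) i.1
    have hne : Dm.Nonempty := ⟨η.symm i, Finset.mem_image_of_mem _ hiD⟩
    set lo : Fin n := η.symm i with hlo'
    set M : Fin n := Dm.max' hne with hM'
    have hmemiff : ∀ b : Fin n, b ∈ Dm ↔ KuraAux.Desc pN i.1 (η b).1 := by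
      intro b
      simp only [hDm, Finset.mem_image]
      constructor
      · rintro ⟨j, hj, rfl⟩
        rw [η.apply_symm_apply]
        simp only [hD, Finset.mem_filter] at hj
        exact hj.2
      · intro h
        exact ⟨η b, by
          simp only [hD, Finset.mem_filter, Finset.mem_univ, true_and]; exact h,
          η.symm_apply_apply b⟩
    have hprefix : ∀ b : Fin n, b ∈ Dm → keyF i <+: keyF (η b) := fun b hb =>
      (KuraAux.desc_iff_prefix (hp := hp) hp0).1 ((hmemiff b).1 hb)
    have hloDm : lo ∈ Dm := Finset.mem_image_of_mem _ hiD
    have hlokey : keyF (η lo) = keyF i := by rw [hlo', η.apply_symm_apply]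
    have hlole : ∀ b ∈ Dm, lo ≤ b := by
      intro b hb
      have h1 : keyF (η lo) ≤ keyF (η b) := by
        rw [hlokey]
        exact KuraAux.prefix_le _ _ (hprefix b hb)
      exact (hSM.le_iff_le).1 h1
    have hIcc : Dm = Finset.Icc lo M := by
      ext b
      rw [Finset.mem_Icc]
      constructor
      · exact fun hb => ⟨hlole b hb, Finset.le_max' Dm b hb⟩
      · rintro ⟨h1, h2⟩
        rw [hmemiff]
        apply (KuraAux.desc_iff_prefix (hp := hp) hp0).2
        have := KuraAux.prefix_of_between (keyF i) (keyF (η lo)) (keyF (η b)) (keyF (η M))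
          (by rw [hlokey]) (hprefix M (Dm.max'_mem hne)) (hSM.monotone h1) (hSM.monotone h2)
        exact this
    have hsum1 : S i.1 = ∑ b ∈ Dm, y b := by
      rw [hDm, Finset.sum_image (fun a _ b _ h => η.symm.injective h)]
    have hloM : lo.1 ≤ M.1 := hlole M (Dm.max'_mem hne)
    have hfilters : Finset.univ.filter (fun b : Fin n => b.1 < M.1 + 1)
        = Finset.univ.filter (fun b : Fin n => b.1 < lo.1) ∪ Finset.Icc lo M := by
      ext b
      simp only [Finset.mem_union, Finset.mem_filter, Finset.mem_univ, true_and,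
        Finset.mem_Icc, Fin.le_def]
      omega
    have hdisj : Disjoint (Finset.univ.filter (fun b : Fin n => b.1 < lo.1))
        (Finset.Icc lo M) := by
      rw [Finset.disjoint_left]
      intro b hb hb2
      simp only [Finset.mem_filter] at hb
      rw [Finset.mem_Icc, Fin.le_def, Fin.le_def] at hb2
      omega
    have hP1 := hPsumEq (M.1 + 1) (by omega)
    have hP2 := hPsumEq lo.1 (by omega)
    have hPsplit : Psum (M.1 + 1) = Psum lo.1 + ∑ b ∈ Finset.Icc lo M, y b := by
      rw [hP1, hP2, hfilters, Finset.sum_union hdisj]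
    have hSeq : S i.1 = Psum (M.1 + 1) - Psum lo.1 := by
      rw [hsum1, hIcc, hPsplit]; ring
    rw [hSeq, abs_le]
    have b1 := hPsumbd (M.1 + 1)
    have b2 := hPsumbd lo.1
    constructor <;> linarith [b1.1, b1.2, b2.1, b2.2]
  have hSpart : ∀ i : Fin n, S i.1 = y (η.symm i) +
      ∑ cc ∈ Finset.univ.filter (fun cc : Fin n => cc ≠ 0 ∧ pN cc.1 = i.1), S cc.1 := by
    intro i
    have hset : Finset.univ.filter (fun j : Fin n => KuraAux.Desc pN i.1 j.1)
        = insert i ((Finset.univ.filter (fun cc : Fin n => cc ≠ 0 ∧ pN cc.1 = i.1)).biUnion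
            (fun cc => Finset.univ.filter (fun j : Fin n => KuraAux.Desc pN cc.1 j.1))) := by
      ext j
      simp only [Finset.mem_insert, Finset.mem_filter, Finset.mem_biUnion, Finset.mem_univ,
        true_and]
      constructor
      · intro hdesc
        by_cases hji : j = i
        · exact Or.inl hji
        · have hne : j.1 ≠ i.1 := fun h => hji (Fin.val_injective h)
          obtain ⟨cd, hc0, hcp, hci, hcd⟩ := KuraAux.desc_child (hp := hp) hp0 hdesc hne
          have hcn : cd < n := lt_of_le_of_lt (KuraAux.desc_le (hp := hp) hp0 hcd) j.2
          refine Or.inr ⟨⟨cd, hcn⟩, ⟨?_, hcp⟩, hcd⟩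
          intro hcon
          exact hc0 (by simpa [Fin.ext_iff] using hcon)
      · rintro (rfl | ⟨cc, ⟨hcc0, hccp⟩, hccd⟩)
        · exact KuraAux.desc_refl (p := pN) j.1
        · exact KuraAux.desc_of_child_desc (hp := hp) hp0 hccp hccd
    have hdisj2 : ((Finset.univ.filter
        (fun cc : Fin n => cc ≠ 0 ∧ pN cc.1 = i.1) : Finset (Fin n)) : Set (Fin n)).PairwiseDisjoint
        (fun cc => Finset.univ.filter (fun j : Fin n => KuraAux.Desc pN cc.1 j.1)) := by
      intro c1 hc1 c2 hc2 hne12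
      simp only [Finset.coe_filter, Set.mem_setOf_eq, Finset.mem_univ, true_and] at hc1 hc2
      rw [Function.onFun, Finset.disjoint_left]
      intro j hj1 hj2
      simp only [Finset.mem_filter, Finset.mem_univ, true_and] at hj1 hj2
      exact KuraAux.desc_disjoint (hp := hp) hp0 hc1.2 hc2.2
        (fun h => hc1.1 (Fin.ext (by simp [h])))
        (fun h => hc2.1 (Fin.ext (by simp [h])))
        (fun h => hne12 (Fin.val_injective h)) hj1 hj2
    have hinotin : i ∉ (Finset.univ.filter
        (fun cc : Fin n => cc ≠ 0 ∧ pN cc.1 = i.1)).biUnion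
        (fun cc => Finset.univ.filter (fun j : Fin n => KuraAux.Desc pN cc.1 j.1)) := by
      intro hcon
      simp only [Finset.mem_biUnion, Finset.mem_filter, Finset.mem_univ, true_and] at hcon
      obtain ⟨cc, ⟨hcc0, hccp⟩, hccd⟩ := hcon
      exact KuraAux.not_desc_child_self (hp := hp) hp0 hccp
        (fun h => hcc0 (Fin.ext (by simp [h]))) hccd
    calc S i.1 = ∑ j ∈ insert i ((Finset.univ.filter
          (fun cc : Fin n => cc ≠ 0 ∧ pN cc.1 = i.1)).biUnion
          (fun cc => Finset.univ.filter (fun j : Fin n => KuraAux.Desc pN cc.1 j.1))),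
          y (η.symm j) := by simp only [hS]; rw [hset]
      _ = y (η.symm i) + ∑ cc ∈ Finset.univ.filter
            (fun cc : Fin n => cc ≠ 0 ∧ pN cc.1 = i.1),
            ∑ j ∈ Finset.univ.filter (fun j : Fin n => KuraAux.Desc pN cc.1 j.1),
            y (η.symm j) := by
          rw [Finset.sum_insert hinotin, Finset.sum_biUnion hdisj2]
      _ = y (η.symm i) + ∑ cc ∈ Finset.univ.filter
            (fun cc : Fin n => cc ≠ 0 ∧ pN cc.1 = i.1), S cc.1 := rfl
  have hS0 : S 0 = 0 := by
    have huniv : Finset.univ.filter (fun j : Fin n => KuraAux.Desc pN 0 j.1)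
        = Finset.univ := by
      ext j
      simp only [Finset.mem_filter, Finset.mem_univ, true_and, iff_true]
      exact KuraAux.desc_zero (hp := hp) hp0 j.1
    have h1 : S 0 = ∑ j : Fin n, y (η.symm j) := by simp only [hS]; rw [huniv]
    rw [h1, Equiv.sum_comp η.symm y]
    have h2 : ∑ b : Fin n, y b = ∑ v : V, w v := by
      simp only [hy]
      exact Equiv.sum_comp γ w
    rw [h2]
    linarith [hsumw]
  -- ### the permutation and conclusion
  set aP : Equiv.Perm V := (e.symm.trans (η.symm : Fin n ≃ Fin n)).trans γ with haP
  have haPval : ∀ i : Fin n, aP (e i) = γ (η.symm i) := by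
    intro i
    simp [haP]
  have hmean : kuramotoMean (fun v => ω (aP v)) = c := by
    rw [hc]
    unfold kuramotoMean
    rw [Equiv.sum_comp aP ω]
  have hxval : ∀ i : Fin n, ω (aP (e i)) - c = y (η.symm i) := by
    intro i
    rw [haPval i]
  refine ⟨aP, ?_⟩
  intro k hk
  have hBA : B - A ≤ k := by
    have : B - A = Finset.univ.sup' hune ω - Finset.univ.inf' hune ω := by
      rw [hA, hB]; ring
    rw [this]
    exact hk
  rcases le_or_gt k 0 with hk0 | hkpos
  · -- k = 0, constant frequencies
    have hAB : A = 0 ∧ B = 0 := by constructor <;> linarith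
    have hk0' : k = 0 := by linarith
    refine ⟨0, ?_⟩
    intro v
    rw [hmean, hk0']
    have hwv : w (aP v) = 0 := by
      have := hwA (aP v)
      rw [hAB.1, hAB.2] at this
      linarith [this.1, this.2]
    have : ω (aP v) - c = 0 := hwv
    simp only [zero_mul, add_zero]
    exact this
  · -- main case
    have hkne : k ≠ 0 := ne_of_gt hkpos
    set g : ℕ → ℝ := fun m => Real.arcsin (S m / k) with hg
    set φN : ℕ → ℝ := KuraAux.buildPhi pN hp g with hφN
    have hφrec : ∀ j : Fin n, j ≠ 0 → φN j.1 = φN (pN j.1) + Real.arcsin (S j.1 / k) := by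
      intro j hj
      have hj0 : j.1 ≠ 0 := fun h => hj (Fin.ext (by simp [h]))
      simp only [hφN]
      rw [KuraAux.buildPhi_pos hj0]
    have hsinval : ∀ j : Fin n, Real.sin (Real.arcsin (S j.1 / k)) = S j.1 / k := by
      intro j
      have habs : |S j.1 / k| ≤ 1 := by
        rw [abs_div, abs_of_pos hkpos]
        exact div_le_one_of_le₀ ((hSbound j).trans hBA) (le_of_lt hkpos)
      rw [abs_le] at habs
      exact Real.sin_arcsin habs.1 habs.2
    refine ⟨fun v => φN (e.symm v).1, ?_⟩
    intro v
    obtain ⟨i, rfl⟩ : ∃ i : Fin n, e i = v := ⟨e.symm v, e.apply_symm_apply v⟩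
    have hsum : ∑ u ∈ Finset.univ.filter (fun u => T.Adj (e i) u),
        Real.sin (φN (e.symm u).1 - φN (e.symm (e i)).1)
        = (if i ≠ 0 then -(S i.1 / k) else 0)
          + ∑ cc ∈ Finset.univ.filter (fun cc : Fin n => cc ≠ 0 ∧ pN cc.1 = i.1),
              S cc.1 / k := by
      rw [Finset.sum_filter]
      rw [← Equiv.sum_comp e (fun u => if T.Adj (e i) u then
        Real.sin (φN (e.symm u).1 - φN (e.symm (e i)).1) else 0)]
      simp only [e.symm_apply_apply]
      have hsplit : ∀ j : Fin n,
          (if T.Adj (e i) (e j) then Real.sin (φN j.1 - φN i.1) else 0)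
          = (if (i ≠ 0 ∧ pN i.1 = j.1) then Real.sin (φN j.1 - φN i.1) else 0)
            + (if (j ≠ 0 ∧ pN j.1 = i.1) then Real.sin (φN j.1 - φN i.1) else 0) := by
        intro j
        by_cases h1 : (i ≠ 0 ∧ pN i.1 = j.1) <;> by_cases h2 : (j ≠ 0 ∧ pN j.1 = i.1)
        · exfalso
          have hi1 : 0 < i.1 := by
            rcases Nat.eq_zero_or_pos i.1 with h | h
            · exact absurd (Fin.ext (by simp [h])) h1.1
            · exact h
          have hj1 : 0 < j.1 := by
            rcases Nat.eq_zero_or_pos j.1 with h | h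
            · exact absurd (Fin.ext (by simp [h])) h2.1
            · exact h
          have := hp i.1 hi1
          have := hp j.1 hj1
          omega
        · rw [if_pos ((hAdjFin i j).2 (Or.inl h1)), if_pos h1, if_neg h2, add_zero]
        · rw [if_pos ((hAdjFin i j).2 (Or.inr h2)), if_neg h1, if_pos h2, zero_add]
        · rw [if_neg (fun hadj => by
              rcases (hAdjFin i j).1 hadj with h | h
              exacts [h1 h, h2 h]), if_neg h1, if_neg h2, add_zero]
      rw [Finset.sum_congr rfl (fun j _ => hsplit j), Finset.sum_add_distrib]
      congr 1
      · -- parent part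
        by_cases hi0 : i = 0
        · simp [hi0]
        · rw [if_pos hi0]
          have hi1 : 0 < i.1 := by
            rcases Nat.eq_zero_or_pos i.1 with h | h
            · exact absurd (Fin.ext (by simp [h])) hi0
            · exact h
          have hlt : pN i.1 < i.1 := hp i.1 hi1
          set jp : Fin n := ⟨pN i.1, lt_trans hlt i.2⟩ with hjp
          have hcondiff : ∀ j : Fin n, (i ≠ 0 ∧ pN i.1 = j.1) ↔ j = jp := by
            intro j
            constructor
            · rintro ⟨-, h⟩
              exact Fin.ext (by simp [hjp, ← h])
            · rintro rfl
              exact ⟨hi0, rfl⟩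
          have hrw : (∑ j : Fin n, if (i ≠ 0 ∧ pN i.1 = j.1)
              then Real.sin (φN j.1 - φN i.1) else 0)
              = ∑ j : Fin n, if j = jp then Real.sin (φN j.1 - φN i.1) else 0 :=
            Finset.sum_congr rfl (fun j _ => by
              by_cases h : j = jp
              · rw [if_pos h, if_pos ((hcondiff j).2 h)]
              · rw [if_neg h, if_neg (fun hc => h ((hcondiff j).1 hc))])
          rw [hrw, Finset.sum_ite_eq' Finset.univ jp
            (fun j => Real.sin (φN j.1 - φN i.1)), if_pos (Finset.mem_univ jp)]
          have hstep : φN jp.1 - φN i.1 = -(Real.arcsin (S i.1 / k)) := by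
            rw [hφrec i hi0]
            simp [hjp]
          rw [hstep, Real.sin_neg, hsinval i]
      · -- children part
        rw [← Finset.sum_filter]
        apply Finset.sum_congr rfl
        intro j hj
        simp only [Finset.mem_filter, Finset.mem_univ, true_and] at hj
        have hstep : φN j.1 - φN i.1 = Real.arcsin (S j.1 / k) := by
          rw [hφrec j hj.1, hj.2]
          ring
        rw [hstep, hsinval j]
    show ω (aP (e i)) - kuramotoMean (fun v => ω (aP v)) + k * _ = 0
    rw [hmean, hsum]
    have halg : k * ((if i ≠ 0 then -(S i.1 / k) else 0)
        + ∑ cc ∈ Finset.univ.filter (fun cc : Fin n => cc ≠ 0 ∧ pN cc.1 = i.1), S cc.1 / k)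
        = (if i ≠ 0 then -(S i.1) else 0)
          + ∑ cc ∈ Finset.univ.filter (fun cc : Fin n => cc ≠ 0 ∧ pN cc.1 = i.1), S cc.1 := by
      rw [mul_add, Finset.mul_sum]
      congr 1
      · by_cases hi0 : i = 0
        · simp [hi0]
        · rw [if_pos hi0, if_pos hi0]
          rw [mul_neg, mul_div_cancel₀ _ hkne]
      · apply Finset.sum_congr rfl
        intro cc _
        rw [mul_div_cancel₀ _ hkne]
    rw [halg]
    have hpartval : ∑ cc ∈ Finset.univ.filter
        (fun cc : Fin n => cc ≠ 0 ∧ pN cc.1 = i.1), S cc.1 = S i.1 - y (η.symm i) := by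
      have := hSpart i
      linarith
    rw [hpartval, hxval i]
    by_cases hi0 : i = 0
    · rw [if_neg (by simp [hi0])]
      have : S i.1 = 0 := by
        rw [hi0]
        simpa using hS0
      rw [this]
      ring
    · rw [if_pos hi0]
      ring
end
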